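/- arXiv:2105.03515 — 4 statements merged into one kernel-verified Lean document; each statement's English description precedes it below -/
import Mathlib

section
/- In sl(4, R), consider the four elements Z_1 = e_1 - f_1, Z_2 = e_2 - f_2, Z_3 = e_3 + f_3 together with Z_0 = e_0 - f_0 where e_0 = E_{41}, f_0 = E_{14} (and e_i = E_{i,i+1}, f_i = E_{i+1,i} for i = 1,2,3). Then these satisfy: ad(Z_0)^2(Z_1) = -Z_1, ad(Z_0)^2(Z_3) = -Z_3, ad(Z_1)^2(Z_0) = -Z_0, ad(Z_3)^2(Z_0) = Z_0, ad(Z_2)^2(Z_1) = -Z_1, ad(Z_1)^2(Z_2) = -Z_2, ad(Z_3)^2(Z_2) = Z_2, ad(Z_2)^2(Z_3) = -Z_3, and [Z_0,Z_2] = [Z_1,Z_3] = 0; consequently (-ad(Z_0)^2 + ad(Z_1)^2 + ad(Z_2)^2 + ad(Z_3)^2)(Z_mu) = 0 for all mu = 0,1,2,3. -/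
open Matrix

set_option maxHeartbeats 2000000 in
/-- Berman generator computations in `sl(4,ℝ)` verifying the relations of the
Lorentzian QMSA `Q_{3,1}(0,0,0,0)`. -/
theorem berman_generators_sl4_lorentzian
    (Z0 Z1 Z2 Z3 : Matrix (Fin 4) (Fin 4) ℝ)
    (hZ0 : Z0 = single 3 0 1 - single 0 3 1)
    (hZ1 : Z1 = single 0 1 1 - single 1 0 1)
    (hZ2 : Z2 = single 1 2 1 - single 2 1 1)
    (hZ3 : Z3 = single 2 3 1 + single 3 2 1) :
    ⁅Z0, ⁅Z0, Z1⁆⁆ = -Z1 ∧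
    ⁅Z0, ⁅Z0, Z3⁆⁆ = -Z3 ∧
    ⁅Z1, ⁅Z1, Z0⁆⁆ = -Z0 ∧
    ⁅Z3, ⁅Z3, Z0⁆⁆ = Z0 ∧
    ⁅Z2, ⁅Z2, Z1⁆⁆ = -Z1 ∧
    ⁅Z1, ⁅Z1, Z2⁆⁆ = -Z2 ∧
    ⁅Z3, ⁅Z3, Z2⁆⁆ = Z2 ∧
    ⁅Z2, ⁅Z2, Z3⁆⁆ = -Z3 ∧
    ⁅Z0, Z2⁆ = 0 ∧
    ⁅Z1, Z3⁆ = 0 ∧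
    (∀ W, W = Z0 ∨ W = Z1 ∨ W = Z2 ∨ W = Z3 →
      -⁅Z0, ⁅Z0, W⁆⁆ + ⁅Z1, ⁅Z1, W⁆⁆ + ⁅Z2, ⁅Z2, W⁆⁆ + ⁅Z3, ⁅Z3, W⁆⁆ = 0) := by
  have h0 : single 3 0 1 - single 0 3 1
      = (!![0,0,0,-1; 0,0,0,0; 0,0,0,0; 1,0,0,0] : Matrix (Fin 4) (Fin 4) ℝ) := by
    ext i j; fin_cases i <;> fin_cases j <;> simp [Matrix.single] <;> rfl
  have h1 : single 0 1 1 - single 1 0 1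
      = (!![0,1,0,0; -1,0,0,0; 0,0,0,0; 0,0,0,0] : Matrix (Fin 4) (Fin 4) ℝ) := by
    ext i j; fin_cases i <;> fin_cases j <;> simp [Matrix.single] <;> rfl
  have h2 : single 1 2 1 - single 2 1 1
      = (!![0,0,0,0; 0,0,1,0; 0,-1,0,0; 0,0,0,0] : Matrix (Fin 4) (Fin 4) ℝ) := by
    ext i j; fin_cases i <;> fin_cases j <;> simp [Matrix.single] <;> rfl
  have h3 : single 2 3 1 + single 3 2 1
      = (!![0,0,0,0; 0,0,0,0; 0,0,0,1; 0,0,1,0] : Matrix (Fin 4) (Fin 4) ℝ) := by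
    ext i j; fin_cases i <;> fin_cases j <;> simp [Matrix.single] <;> rfl
  subst hZ0 hZ1 hZ2 hZ3
  rw [h0, h1, h2, h3]
  set A0 := (!![0,0,0,-1; 0,0,0,0; 0,0,0,0; 1,0,0,0] : Matrix (Fin 4) (Fin 4) ℝ) with hA0
  set A1 := (!![0,1,0,0; -1,0,0,0; 0,0,0,0; 0,0,0,0] : Matrix (Fin 4) (Fin 4) ℝ) with hA1
  set A2 := (!![0,0,0,0; 0,0,1,0; 0,-1,0,0; 0,0,0,0] : Matrix (Fin 4) (Fin 4) ℝ) with hA2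
  set A3 := (!![0,0,0,0; 0,0,0,0; 0,0,0,1; 0,0,1,0] : Matrix (Fin 4) (Fin 4) ℝ) with hA3
  have a1 : ⁅A0, ⁅A0, A1⁆⁆ = -A1 := by
    rw [hA0, hA1]; ext i j; fin_cases i <;> fin_cases j <;>
      simp [Ring.lie_def, Matrix.mul_apply, Fin.sum_univ_four] <;>
      first | rfl | norm_num [Matrix.vecHead, Matrix.vecTail, Function.comp]
  have a2 : ⁅A0, ⁅A0, A3⁆⁆ = -A3 := by
    rw [hA0, hA3]; ext i j; fin_cases i <;> fin_cases j <;>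
      simp [Ring.lie_def, Matrix.mul_apply, Fin.sum_univ_four] <;>
      first | rfl | norm_num [Matrix.vecHead, Matrix.vecTail, Function.comp]
  have a3 : ⁅A1, ⁅A1, A0⁆⁆ = -A0 := by
    rw [hA0, hA1]; ext i j; fin_cases i <;> fin_cases j <;>
      simp [Ring.lie_def, Matrix.mul_apply, Fin.sum_univ_four] <;>
      first | rfl | norm_num [Matrix.vecHead, Matrix.vecTail, Function.comp]
  have a4 : ⁅A3, ⁅A3, A0⁆⁆ = A0 := by
    rw [hA0, hA3]; ext i j; fin_cases i <;> fin_cases j <;>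
      simp [Ring.lie_def, Matrix.mul_apply, Fin.sum_univ_four] <;>
      first | rfl | norm_num [Matrix.vecHead, Matrix.vecTail, Function.comp]
  have a5 : ⁅A2, ⁅A2, A1⁆⁆ = -A1 := by
    rw [hA1, hA2]; ext i j; fin_cases i <;> fin_cases j <;>
      simp [Ring.lie_def, Matrix.mul_apply, Fin.sum_univ_four] <;>
      first | rfl | norm_num [Matrix.vecHead, Matrix.vecTail, Function.comp]
  have a6 : ⁅A1, ⁅A1, A2⁆⁆ = -A2 := by
    rw [hA1, hA2]; ext i j; fin_cases i <;> fin_cases j <;>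
      simp [Ring.lie_def, Matrix.mul_apply, Fin.sum_univ_four] <;>
      first | rfl | norm_num [Matrix.vecHead, Matrix.vecTail, Function.comp]
  have a7 : ⁅A3, ⁅A3, A2⁆⁆ = A2 := by
    rw [hA2, hA3]; ext i j; fin_cases i <;> fin_cases j <;>
      simp [Ring.lie_def, Matrix.mul_apply, Fin.sum_univ_four] <;>
      first | rfl | norm_num [Matrix.vecHead, Matrix.vecTail, Function.comp]
  have a8 : ⁅A2, ⁅A2, A3⁆⁆ = -A3 := by
    rw [hA2, hA3]; ext i j; fin_cases i <;> fin_cases j <;>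
      simp [Ring.lie_def, Matrix.mul_apply, Fin.sum_univ_four] <;>
      first | rfl | norm_num [Matrix.vecHead, Matrix.vecTail, Function.comp]
  have c02 : ⁅A0, A2⁆ = 0 := by
    rw [hA0, hA2]; ext i j; fin_cases i <;> fin_cases j <;>
      simp [Ring.lie_def, Matrix.mul_apply, Fin.sum_univ_four] <;>
      first | rfl | norm_num [Matrix.vecHead, Matrix.vecTail, Function.comp]
  have c13 : ⁅A1, A3⁆ = 0 := by
    rw [hA1, hA3]; ext i j; fin_cases i <;> fin_cases j <;>
      simp [Ring.lie_def, Matrix.mul_apply, Fin.sum_univ_four] <;>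
      first | rfl | norm_num [Matrix.vecHead, Matrix.vecTail, Function.comp]
  letI := LieRing.ofAssociativeRing (A := Matrix (Fin 4) (Fin 4) ℝ)
  have c20 : ⁅A2, A0⁆ = 0 := by rw [← neg_eq_zero, lie_skew, c02]
  have c31 : ⁅A3, A1⁆ = 0 := by rw [← neg_eq_zero, lie_skew, c13]
  refine ⟨a1, a2, a3, a4, a5, a6, a7, a8, c02, c13, ?_⟩
  rintro W (rfl | rfl | rfl | rfl)
  · rw [lie_self, lie_zero, a3, a4, c20, lie_zero]; abel
  · rw [lie_self, lie_zero, a1, a5, c31, lie_zero]; abel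
  · rw [lie_self, lie_zero, a6, a7, c02, lie_zero]; abel
  · rw [lie_self, lie_zero, a2, a8, c13, lie_zero]; abel
end

section
/- Let g be a Lie algebra with elements e_i, f_i, h_i and e_j, f_j, h_j satisfying the Chevalley--Serre relations for a simply-laced Cartan matrix entry a_{ij} = a_{ji} = -1: [h_i,e_j] = -e_j, [h_i,f_j] = f_j, [e_i,f_j] = 0 = [e_j,f_i], [e_i,f_i] = h_i, [h_i,e_i] = 2e_i, [h_i,f_i] = -2f_i, ad(e_i)^2(e_j) = 0, ad(f_i)^2(f_j) = 0. Set X_i = e_i - f_i, X_j = e_j - f_j, Y_j = e_j + f_j. Then [X_i,[X_i,X_j]] = -X_j and [X_i,[X_i,Y_j]] = -Y_j. -/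
/-- Berman relations `[X_i,[X_i,X_j]] = -X_j` and `[X_i,[X_i,Y_j]] = -Y_j` derived from the
Chevalley–Serre relations for two adjacent nodes (`a_{ij} = a_{ji} = -1`) of a simply-laced
diagram. -/
theorem berman_relations_white_node
    (K : Type*) [Field K]
    (g : Type*) [LieRing g] [LieAlgebra K g]
    (ei fi hi ej fj : g)
    (hhiej : ⁅hi, ej⁆ = -ej)
    (hhifj : ⁅hi, fj⁆ = fj)
    (heifj : ⁅ei, fj⁆ = 0)
    (hejfi : ⁅ej, fi⁆ = 0)
    (heifi : ⁅ei, fi⁆ = hi)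
    (hhiei : ⁅hi, ei⁆ = (2 : K) • ei)
    (hhifi : ⁅hi, fi⁆ = -((2 : K) • fi))
    (hserre_e : ⁅ei, ⁅ei, ej⁆⁆ = 0)
    (hserre_f : ⁅fi, ⁅fi, fj⁆⁆ = 0) :
    ⁅ei - fi, ⁅ei - fi, ej - fj⁆⁆ = -(ej - fj) ∧
    ⁅ei - fi, ⁅ei - fi, ej + fj⁆⁆ = -(ej + fj) := by
  have hfiej : ⁅fi, ej⁆ = 0 := by rw [← lie_skew, hejfi, neg_zero]
  have hfiei : ⁅fi, ei⁆ = -hi := by rw [← lie_skew, heifi]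
  have h1 : ⁅ei, ⁅fi, fj⁆⁆ = fj := by
    rw [leibniz_lie, heifi, heifj, lie_zero, add_zero, hhifj]
  have h2 : ⁅fi, ⁅ei, ej⁆⁆ = ej := by
    rw [leibniz_lie, hfiei, hfiej, lie_zero, add_zero, neg_lie, hhiej, neg_neg]
  constructor <;>
  · simp only [lie_sub, sub_lie, lie_add, add_lie, hfiej, heifj, h1, h2, hserre_e, hserre_f,
      lie_zero, zero_lie, lie_neg, neg_lie, sub_zero, zero_sub, add_zero, zero_add]
    abel
end

section
/- Let g be a Lie algebra with elements satisfying the Chevalley--Serre relations for two adjacent nodes of a simply-laced diagram (a_{ij} = -1) as above. Set Y_i = e_i + f_i, X_j = e_j - f_j, Y_j = e_j + f_j. Then [Y_i,[Y_i,X_j]] = X_j and [Y_i,[Y_i,Y_j]] = Y_j. -/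
/-- Berman relations `[Y_i,[Y_i,X_j]] = X_j` and `[Y_i,[Y_i,Y_j]] = Y_j` derived from the
Chevalley–Serre relations for two adjacent nodes (`a_{ij} = a_{ji} = -1`) of a simply-laced
diagram. -/
theorem berman_relations_black_node
    (K : Type*) [Field K]
    (g : Type*) [LieRing g] [LieAlgebra K g]
    (ei fi hi ej fj : g)
    (hhiej : ⁅hi, ej⁆ = -ej)
    (hhifj : ⁅hi, fj⁆ = fj)
    (heifj : ⁅ei, fj⁆ = 0)
    (hejfi : ⁅ej, fi⁆ = 0)
    (heifi : ⁅ei, fi⁆ = hi)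
    (hhiei : ⁅hi, ei⁆ = (2 : K) • ei)
    (hhifi : ⁅hi, fi⁆ = -((2 : K) • fi))
    (hserre_e : ⁅ei, ⁅ei, ej⁆⁆ = 0)
    (hserre_f : ⁅fi, ⁅fi, fj⁆⁆ = 0) :
    ⁅ei + fi, ⁅ei + fi, ej - fj⁆⁆ = ej - fj ∧
    ⁅ei + fi, ⁅ei + fi, ej + fj⁆⁆ = ej + fj := by
  have hfiej : ⁅fi, ej⁆ = 0 := by rw [← lie_skew, hejfi, neg_zero]
  have hfiei : ⁅fi, ei⁆ = -hi := by rw [← lie_skew, heifi]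
  have ha : ⁅fi, ⁅ei, ej⁆⁆ = ej := by
    rw [leibniz_lie, hfiei, hfiej, lie_zero, add_zero, neg_lie, hhiej, neg_neg]
  have hb : ⁅ei, ⁅fi, fj⁆⁆ = fj := by
    rw [leibniz_lie, heifi, heifj, lie_zero, add_zero, hhifj]
  constructor <;>
  · simp only [lie_add, add_lie, lie_sub, sub_lie, heifj, hfiej, hserre_e, hserre_f, ha, hb,
      lie_zero, zero_lie]
    abel
end

section
/- Let f be the free Lie algebra over C on generators y_1, ..., y_n. Define a map from the free Lie algebra on 2n generators x_1,...,x_{2n} by x_j -> y_j and x_{n+j} -> i·y_j for j = 1,...,n. Then each element sum_{k=1}^{2n} [x_k,[x_k,x_j]] is mapped to zero, i.e. the images satisfy sum_{k=1}^{2n} [z_k,[z_k,z_j]] = 0 for all j, where z_j = y_j and z_{n+j} = i·y_j. Consequently there is a surjective Lie algebra homomorphism Q_{2n,0}(0,...,0) -> f. -/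
open FreeLieAlgebra

/-- The defining relation elements of `Q_{2n,0}(0,…,0)` inside the free Lie algebra
on `2n` generators. -/
noncomputable def yangMillsRelations (n : ℕ) : Set (FreeLieAlgebra ℂ (Fin (2 * n))) :=
  { y | ∃ j : Fin (2 * n),
      y = ∑ k : Fin (2 * n),
            ⁅FreeLieAlgebra.of ℂ k, ⁅FreeLieAlgebra.of ℂ k, FreeLieAlgebra.of ℂ j⁆⁆ }

/-- The ideal generated by the relations of `Q_{2n,0}(0,…,0)`. -/
noncomputable def yangMillsIdeal (n : ℕ) : LieIdeal ℂ (FreeLieAlgebra ℂ (Fin (2 * n))) :=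
  LieSubmodule.lieSpan ℂ (FreeLieAlgebra ℂ (Fin (2 * n))) (yangMillsRelations n)

/-- The quantum minimal surface algebra `Q_{2n,0}(0,…,0)` over `ℂ`. -/
noncomputable abbrev YangMillsAlgebra (n : ℕ) :=
  FreeLieAlgebra ℂ (Fin (2 * n)) ⧸ yangMillsIdeal n

/-- The images `z_j = y_j`, `z_{n+j} = i·y_j` in the free Lie algebra on `n` generators. -/
noncomputable def herscovichGen (n : ℕ) (k : Fin (2 * n)) : FreeLieAlgebra ℂ (Fin n) :=
  if h : (k : ℕ) < n then FreeLieAlgebra.of ℂ ⟨k, h⟩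
  else Complex.I • FreeLieAlgebra.of ℂ ⟨(k : ℕ) - n, by omega⟩


lemma hg_cast (n : ℕ) (i : Fin n) :
    herscovichGen n (finCongr (two_mul n).symm (Fin.castAdd n i)) = of ℂ i := by
  simp [herscovichGen, i.isLt]

lemma hg_nat (n : ℕ) (i : Fin n) :
    herscovichGen n (finCongr (two_mul n).symm (Fin.natAdd n i)) = Complex.I • of ℂ i := by
  simp [herscovichGen]

lemma rel_zero (n : ℕ) (j : Fin (2 * n)) :
    ∑ k : Fin (2 * n), ⁅herscovichGen n k, ⁅herscovichGen n k, herscovichGen n j⁆⁆ = 0 := by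
  set w := herscovichGen n j
  have key : ∀ a : FreeLieAlgebra ℂ (Fin n),
      ⁅(Complex.I • a), ⁅(Complex.I • a), w⁆⁆ = -⁅a, ⁅a, w⁆⁆ := by
    intro a
    simp [smul_lie, lie_smul, smul_smul, Complex.I_mul_I, neg_smul]
  rw [Fintype.sum_equiv (finCongr (two_mul n))
    (fun k => ⁅herscovichGen n k, ⁅herscovichGen n k, w⁆⁆)
    (fun k => ⁅herscovichGen n ((finCongr (two_mul n)).symm k),
              ⁅herscovichGen n ((finCongr (two_mul n)).symm k), w⁆⁆)
    (by intro x; simp)]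
  rw [Fin.sum_univ_add, ← Finset.sum_add_distrib]
  apply Finset.sum_eq_zero
  intro i _
  rw [show (finCongr (two_mul n)).symm = finCongr (two_mul n).symm from rfl,
      hg_nat, hg_cast, key, add_neg_cancel]

noncomputable def psi (n : ℕ) : FreeLieAlgebra ℂ (Fin (2 * n)) →ₗ⁅ℂ⁆ FreeLieAlgebra ℂ (Fin n) :=
  FreeLieAlgebra.lift ℂ (herscovichGen n)

lemma ideal_le_ker (n : ℕ) : yangMillsIdeal n ≤ (psi n).ker := by
  rw [yangMillsIdeal, LieSubmodule.lieSpan_le]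
  rintro y ⟨j, rfl⟩
  refine LieHom.mem_ker.mpr ?_
  have h2 : (psi n) (∑ k : Fin (2 * n), ⁅of ℂ k, ⁅of ℂ k, of ℂ j⁆⁆)
      = ∑ k : Fin (2 * n), (psi n) ⁅of ℂ k, ⁅of ℂ k, of ℂ j⁆⁆ :=
    map_sum (psi n).toLinearMap _ _
  rw [h2]
  simpa [psi, FreeLieAlgebra.lift_of_apply] using rel_zero n j

noncomputable def phi (n : ℕ) : YangMillsAlgebra n →ₗ⁅ℂ⁆ FreeLieAlgebra ℂ (Fin n) :=
  { (yangMillsIdeal n).toSubmodule.liftQ (psi n).toLinearMap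
      (fun x hx => LieHom.mem_ker.mp (ideal_le_ker n hx)) with
    map_lie' := by
      rintro ⟨x⟩ ⟨y⟩
      show Submodule.liftQ _ _ _ ⁅LieSubmodule.Quotient.mk (N := yangMillsIdeal n) x,
            LieSubmodule.Quotient.mk (N := yangMillsIdeal n) y⁆ = _
      rw [← LieSubmodule.Quotient.mk_bracket]
      exact (psi n).map_lie x y }

lemma phi_mk (n : ℕ) (x : FreeLieAlgebra ℂ (Fin (2 * n))) :
    phi n (LieSubmodule.Quotient.mk (N := yangMillsIdeal n) x) = psi n x := rfl

/-- Herscovich's epimorphism: `Q_{2n,0}(0,…,0) ↠ f_n(ℂ)`, the free Lie algebra on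
`n` generators, via `x_j ↦ y_j`, `x_{n+j} ↦ i·y_j`. -/
theorem qmsa_onto_free_lie_algebra (n : ℕ) :
    (∀ j : Fin (2 * n),
      ∑ k : Fin (2 * n), ⁅herscovichGen n k, ⁅herscovichGen n k, herscovichGen n j⁆⁆ = 0) ∧
    ∃ φ : YangMillsAlgebra n →ₗ⁅ℂ⁆ FreeLieAlgebra ℂ (Fin n),
      Function.Surjective φ ∧
      ∀ k : Fin (2 * n),
        φ (LieSubmodule.Quotient.mk (N := yangMillsIdeal n) (FreeLieAlgebra.of ℂ k)) =
          herscovichGen n k := by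
  refine ⟨rel_zero n, phi n, ?_, fun k => by
    rw [phi_mk]; exact FreeLieAlgebra.lift_of_apply (herscovichGen n) k⟩
  set s : FreeLieAlgebra ℂ (Fin n) →ₗ⁅ℂ⁆ YangMillsAlgebra n :=
    FreeLieAlgebra.lift ℂ (fun i : Fin n =>
      LieSubmodule.Quotient.mk (N := yangMillsIdeal n)
        (FreeLieAlgebra.of ℂ (⟨i, by omega⟩ : Fin (2 * n)))) with hs
  have hcomp : ∀ y, (phi n) (s y) = y := by
    have : (phi n).comp s = LieHom.id := by
      apply FreeLieAlgebra.hom_ext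
      intro i
      simp only [LieHom.comp_apply, LieHom.id_apply, hs, FreeLieAlgebra.lift_of_apply]
      rw [phi_mk]
      simp [psi, FreeLieAlgebra.lift_of_apply, herscovichGen, i.isLt]
    intro y; exact LieHom.congr_fun this y
  exact fun y => ⟨s y, hcomp y⟩
end
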